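/- Let Λ₁, Λ₂ and Γ be closed cones in ℝⁿ (closed subsets containing 0 and stable under multiplication by nonnegative scalars) with Γ ∩ (Λ₁ + Λ₂) = {0}. Let w₁, w₂ : ℝⁿ → ℂ be continuous functions such that for some M ∈ ℕ and C > 0 one has |w_j(η)| ≤ C(1+|η|)^M for all η ∈ ℝⁿ (j = 1, 2), and such that for every p ∈ ℕ there is c_p > 0 with |w_j(η)| ≤ c_p(1+|η|)^{−p} for all η ∉ Λ_j (j = 1, 2). Then for every ξ ∈ Γ\{0} the integral (w₁ * w₂)(ξ) = ∫_{ℝⁿ} w₁(ξ − η) w₂(η) dη converges absolutely, and for every p ∈ ℕ there exists C_p > 0 with |(w₁ * w₂)(ξ)| ≤ C_p(1+|ξ|)^{−p} for all ξ ∈ Γ\{0}. -/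
import Mathlib


open MeasureTheory Pointwise
open Metric

private lemma one_add_mul_one_add {x y z : ℝ} (hy : 0 ≤ y) (hz : 0 ≤ z) (h : x ≤ y + z) :
    1 + x ≤ (1 + y) * (1 + z) := by nlinarith

private lemma keyineq {C c c' δ A B D : ℝ} (M p k : ℕ)
    (hC : 0 < C) (hc : 0 < c) (hc' : 0 ≤ c') (hδ : 0 < δ)
    (hA : 1 ≤ A) (hB : 1 ≤ B) (hD : 1 ≤ D)
    (hP : D ≤ A * B) (hδA : δ * A ≤ B) :
    (C * D ^ M) * (c * (B ^ (p + M + M + k))⁻¹) ≤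
      (C * (c + c') / δ ^ (p + M)) * (A ^ p)⁻¹ * (B ^ k)⁻¹ := by
  have hA0 : (0:ℝ) < A := lt_of_lt_of_le one_pos hA
  have hB0 : (0:ℝ) < B := lt_of_lt_of_le one_pos hB
  have hD0 : (0:ℝ) < D := lt_of_lt_of_le one_pos hD
  have h1 : D ^ M ≤ A ^ M * B ^ M := by
    rw [← mul_pow]; exact pow_le_pow_left₀ hD0.le hP M
  have step1 : (C * D ^ M) * (c * (B ^ (p + M + M + k))⁻¹) ≤
      (C * (A ^ M * B ^ M)) * (c * (B ^ (p + M + M + k))⁻¹) := by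
    gcongr
  refine step1.trans ?_
  have eR : (C * (c + c') / δ ^ (p + M)) * (A ^ p)⁻¹ * (B ^ k)⁻¹ =
      C * (c + c') / (δ ^ (p + M) * A ^ p * B ^ k) := by
    rw [div_eq_mul_inv, div_eq_mul_inv, mul_inv, mul_inv]; ring
  rw [eR, le_div_iff₀ (by positivity)]
  have e2 : C * (A ^ M * B ^ M) * (c * (B ^ (p + M + M + k))⁻¹) *
      (δ ^ (p + M) * A ^ p * B ^ k) = (C * c) * ((δ * A) ^ (p + M) / B ^ (p + M)) := by
    field_simp
    ring
  rw [e2]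
  have h3 : (δ * A) ^ (p + M) / B ^ (p + M) ≤ 1 := by
    rw [div_le_one (by positivity)]
    exact pow_le_pow_left₀ (by positivity) hδA _
  calc (C * c) * ((δ * A) ^ (p + M) / B ^ (p + M)) ≤ (C * c) * 1 := by
        exact mul_le_mul_of_nonneg_left h3 (by positivity)
    _ = C * c := mul_one _
    _ ≤ C * (c + c') := by nlinarith

private lemma cone_sep {n : ℕ} {A B : Set (EuclideanSpace ℝ (Fin n))}
    (hA : IsClosed A) (hB : IsClosed B) (hAB : A ∩ B ⊆ {0})
    (hAcone : ∀ x ∈ A, ∀ t : ℝ, 0 ≤ t → t • x ∈ A)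
    (hBcone : ∀ x ∈ B, ∀ t : ℝ, 0 ≤ t → t • x ∈ B)
    (hB0 : (0 : EuclideanSpace ℝ (Fin n)) ∈ B) :
    ∃ δ : ℝ, 0 < δ ∧ δ ≤ 1 ∧ ∀ x ∈ A, ∀ y ∈ B, δ * ‖x‖ ≤ ‖x - y‖ := by
  by_cases hS : (A ∩ sphere (0 : EuclideanSpace ℝ (Fin n)) 1).Nonempty
  · have hScomp : IsCompact (A ∩ sphere (0 : EuclideanSpace ℝ (Fin n)) 1) :=
      (isCompact_sphere _ _).inter_left hA
    obtain ⟨u, huS, humin⟩ := hScomp.exists_isMinOn hS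
      ((continuous_infDist_pt B).continuousOn)
    have hu1 : ‖u‖ = 1 := by
      have := huS.2
      simpa [mem_sphere_iff_norm] using this
    have hu0 : 0 < infDist u B := by
      rcases (infDist_nonneg (x := u) (s := B)).lt_or_eq with h | h
      · exact h
      · exfalso
        have huB : u ∈ B := (hB.mem_iff_infDist_zero ⟨0, hB0⟩).2 h.symm
        have : u = 0 := hAB ⟨huS.1, huB⟩
        rw [this] at hu1; simp at hu1
    refine ⟨min (infDist u B) 1, by positivity, min_le_right _ _, ?_⟩
    intro x hx y hy
    rcases eq_or_ne x 0 with rfl | hx0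
    · simpa using norm_nonneg (0 - y)
    · have hr : 0 < ‖x‖ := norm_pos_iff.2 hx0
      have hux : (‖x‖⁻¹ • x) ∈ A ∩ sphere (0 : EuclideanSpace ℝ (Fin n)) 1 := by
        refine ⟨hAcone x hx _ (by positivity), ?_⟩
        simp [mem_sphere_iff_norm, norm_smul, abs_of_pos (inv_pos.2 hr),
          inv_mul_cancel₀ hr.ne']
      have hv : (‖x‖⁻¹ • y) ∈ B := hBcone y hy _ (by positivity)
      have h1 : infDist u B ≤ infDist (‖x‖⁻¹ • x) B := humin hux
      have h2 : infDist (‖x‖⁻¹ • x) B ≤ dist (‖x‖⁻¹ • x) (‖x‖⁻¹ • y) :=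
        infDist_le_dist_of_mem hv
      have h3 : dist (‖x‖⁻¹ • x) (‖x‖⁻¹ • y) = ‖x‖⁻¹ * ‖x - y‖ := by
        rw [dist_eq_norm, ← smul_sub, norm_smul]
        simp [abs_of_pos (inv_pos.2 hr)]
      have h4 : infDist u B * ‖x‖ ≤ ‖x - y‖ := by
        have := (h1.trans h2).trans_eq h3
        calc infDist u B * ‖x‖ ≤ (‖x‖⁻¹ * ‖x - y‖) * ‖x‖ := by
              exact mul_le_mul_of_nonneg_right this hr.le
          _ = ‖x - y‖ := by field_simp
      calc min (infDist u B) 1 * ‖x‖ ≤ infDist u B * ‖x‖ := by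
            exact mul_le_mul_of_nonneg_right (min_le_left _ _) hr.le
        _ ≤ ‖x - y‖ := h4
  · refine ⟨1, one_pos, le_refl _, ?_⟩
    intro x hx y hy
    have hx0 : x = 0 := by
      by_contra h
      have hr : 0 < ‖x‖ := norm_pos_iff.2 h
      exact hS ⟨‖x‖⁻¹ • x, hAcone x hx _ (by positivity), by
        simp [mem_sphere_iff_norm, norm_smul, abs_of_pos (inv_pos.2 hr),
          inv_mul_cancel₀ hr.ne']⟩
    simpa [hx0] using norm_nonneg (0 - y)

private lemma base_integrable (n : ℕ) :
    Integrable (fun η : EuclideanSpace ℝ (Fin n) => ((1 + ‖η‖) ^ (n + 1) : ℝ)⁻¹) := by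
  have h := integrable_one_add_norm (E := EuclideanSpace ℝ (Fin n)) (μ := volume) (r := (n + 1 : ℝ))
    (by rw [finrank_euclideanSpace_fin]; exact by norm_num)
  refine h.congr ?_
  filter_upwards with x
  rw [show -((n : ℝ) + 1) = -(((n + 1 : ℕ) : ℝ)) by push_cast; ring,
    Real.rpow_neg (by positivity), Real.rpow_natCast]

/--
Let `Λ₁`, `Λ₂`, `Γ` be closed cones in `ℝⁿ` (closed subsets containing
`0`, stable under multiplication by nonnegative scalars) with `Γ ∩ (Λ₁ + Λ₂) = {0}`.
Let `w₁, w₂ : ℝⁿ → ℂ` be continuous, polynomially bounded, and rapidly decreasing off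
`Λ₁` resp. `Λ₂`. Then for every `ξ ∈ Γ \ {0}` the convolution integral
`(w₁ * w₂)(ξ) = ∫ w₁(ξ−η) w₂(η) dη` converges absolutely and, for every `p ∈ ℕ`,
`|(w₁ * w₂)(ξ)| ≤ C_p (1+|ξ|)^{−p}` on `Γ \ {0}`.
-/
theorem stmt6 (n : ℕ) (Λ₁ Λ₂ Γ : Set (EuclideanSpace ℝ (Fin n)))
    (hΛ₁closed : IsClosed Λ₁) (hΛ₂closed : IsClosed Λ₂) (hΓclosed : IsClosed Γ)
    (hΛ₁0 : (0 : EuclideanSpace ℝ (Fin n)) ∈ Λ₁)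
    (hΛ₂0 : (0 : EuclideanSpace ℝ (Fin n)) ∈ Λ₂)
    (hΓ0 : (0 : EuclideanSpace ℝ (Fin n)) ∈ Γ)
    (hΛ₁cone : ∀ x ∈ Λ₁, ∀ t : ℝ, 0 ≤ t → t • x ∈ Λ₁)
    (hΛ₂cone : ∀ x ∈ Λ₂, ∀ t : ℝ, 0 ≤ t → t • x ∈ Λ₂)
    (hΓcone : ∀ x ∈ Γ, ∀ t : ℝ, 0 ≤ t → t • x ∈ Γ)
    (hsep : Γ ∩ (Λ₁ + Λ₂) = {0})
    (w₁ w₂ : EuclideanSpace ℝ (Fin n) → ℂ)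
    (hw₁cont : Continuous w₁) (hw₂cont : Continuous w₂)
    (M : ℕ) (C : ℝ) (hC : 0 < C)
    (hw₁poly : ∀ η, ‖w₁ η‖ ≤ C * (1 + ‖η‖) ^ M)
    (hw₂poly : ∀ η, ‖w₂ η‖ ≤ C * (1 + ‖η‖) ^ M)
    (hw₁dec : ∀ p : ℕ, ∃ c : ℝ, 0 < c ∧ ∀ η ∉ Λ₁, ‖w₁ η‖ ≤ c * (1 + ‖η‖) ^ (-(p : ℤ)))
    (hw₂dec : ∀ p : ℕ, ∃ c : ℝ, 0 < c ∧ ∀ η ∉ Λ₂, ‖w₂ η‖ ≤ c * (1 + ‖η‖) ^ (-(p : ℤ))) :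
    (∀ ξ ∈ Γ \ {0}, Integrable (fun η => w₁ (ξ - η) * w₂ η)) ∧
    ∀ p : ℕ, ∃ Cp : ℝ, 0 < Cp ∧ ∀ ξ ∈ Γ \ {0},
      ‖∫ η, w₁ (ξ - η) * w₂ η‖ ≤ Cp * (1 + ‖ξ‖) ^ (-(p : ℤ)) := by
  classical
  -- separation
  have hΓΛ₁ : Γ ∩ Λ₁ ⊆ {0} := by
    intro x hx
    have hmem : x ∈ Γ ∩ (Λ₁ + Λ₂) :=
      ⟨hx.1, by simpa using Set.add_mem_add hx.2 hΛ₂0⟩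
    rw [hsep] at hmem; exact hmem
  have hΓΛ₂ : Γ ∩ Λ₂ ⊆ {0} := by
    intro x hx
    have hmem : x ∈ Γ ∩ (Λ₁ + Λ₂) :=
      ⟨hx.1, by simpa using Set.add_mem_add hΛ₁0 hx.2⟩
    rw [hsep] at hmem; exact hmem
  obtain ⟨δ₁, hδ₁pos, hδ₁le, hδ₁⟩ := cone_sep hΓclosed hΛ₁closed hΓΛ₁ hΓcone hΛ₁cone hΛ₁0
  obtain ⟨δ₂, hδ₂pos, hδ₂le, hδ₂⟩ := cone_sep hΓclosed hΛ₂closed hΓΛ₂ hΓcone hΛ₂cone hΛ₂0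
  set δ : ℝ := min (min δ₁ δ₂) (1/2) with hδdef
  have hδpos : 0 < δ := by positivity
  have hδle1 : δ ≤ 1 := le_trans (min_le_right _ _) (by norm_num)
  have hδleδ₁ : δ ≤ δ₁ := le_trans (min_le_left _ _) (min_le_left _ _)
  have hδleδ₂ : δ ≤ δ₂ := le_trans (min_le_left _ _) (min_le_right _ _)
  have hδlehalf : δ ≤ 1/2 := min_le_right _ _
  -- dichotomy
  have dich : ∀ ξ ∈ Γ \ {0}, ∀ η : EuclideanSpace ℝ (Fin n),
      (η ∉ Λ₂ ∧ δ * (1 + ‖ξ‖) ≤ 1 + ‖η‖) ∨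
      (ξ - η ∉ Λ₁ ∧ δ * (1 + ‖ξ‖) ≤ 1 + ‖ξ - η‖) := by
    rintro ξ ⟨hξΓ, hξ0⟩ η
    have hξ0' : ξ ≠ 0 := by simpa using hξ0
    by_cases hη2 : η ∈ Λ₂
    · right
      constructor
      · intro hc
        apply hξ0'
        have hmem : ξ ∈ Γ ∩ (Λ₁ + Λ₂) :=
          ⟨hξΓ, by simpa using Set.add_mem_add hc hη2⟩
        rw [hsep] at hmem; exact hmem
      · have h := hδ₂ ξ hξΓ η hη2
        nlinarith [norm_nonneg ξ, mul_le_mul_of_nonneg_right hδleδ₂ (norm_nonneg ξ)]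
    · by_cases hη1 : ξ - η ∈ Λ₁
      · left
        refine ⟨hη2, ?_⟩
        have h := hδ₁ ξ hξΓ (ξ - η) hη1
        rw [sub_sub_cancel] at h
        nlinarith [norm_nonneg ξ, mul_le_mul_of_nonneg_right hδleδ₁ (norm_nonneg ξ)]
      · have htri : ‖ξ‖ ≤ ‖ξ - η‖ + ‖η‖ := by
          simpa using norm_add_le (ξ - η) η
        rcases le_or_gt (‖ξ‖ / 2) ‖η‖ with h | h
        · left
          refine ⟨hη2, ?_⟩
          nlinarith [norm_nonneg ξ, mul_le_mul_of_nonneg_right hδlehalf (norm_nonneg ξ)]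
        · right
          refine ⟨hη1, ?_⟩
          nlinarith [norm_nonneg ξ, mul_le_mul_of_nonneg_right hδlehalf (norm_nonneg ξ)]
  -- master pointwise bound
  have master : ∀ p : ℕ, ∃ K : ℝ, 0 < K ∧ ∀ ξ ∈ Γ \ {0}, ∀ η : EuclideanSpace ℝ (Fin n),
      ‖w₁ (ξ - η) * w₂ η‖ ≤ K * ((1 + ‖ξ‖) ^ p)⁻¹ *
        (((1 + ‖η‖) ^ (n + 1))⁻¹ + ((1 + ‖ξ - η‖) ^ (n + 1))⁻¹) := by
    intro p
    obtain ⟨c₁, hc₁pos, hc₁⟩ := hw₁dec (p + M + M + (n + 1))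
    obtain ⟨c₂, hc₂pos, hc₂⟩ := hw₂dec (p + M + M + (n + 1))
    refine ⟨C * (c₁ + c₂) / δ ^ (p + M), by positivity, ?_⟩
    intro ξ hξ η
    have hA : (1:ℝ) ≤ 1 + ‖ξ‖ := by simpa using norm_nonneg ξ
    have hB : (1:ℝ) ≤ 1 + ‖η‖ := by simpa using norm_nonneg η
    have hD : (1:ℝ) ≤ 1 + ‖ξ - η‖ := by simpa using norm_nonneg (ξ - η)
    rcases dich ξ hξ η with ⟨hη2, hd⟩ | ⟨hη1, hd⟩
    · -- w₂ decays
      have h2 : ‖w₂ η‖ ≤ c₂ * ((1 + ‖η‖) ^ (p + M + M + (n + 1)))⁻¹ := by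
        have := hc₂ η hη2
        rwa [zpow_neg, zpow_natCast] at this
      have hP : 1 + ‖ξ - η‖ ≤ (1 + ‖ξ‖) * (1 + ‖η‖) :=
        one_add_mul_one_add (norm_nonneg ξ) (norm_nonneg η) (norm_sub_le ξ η)
      calc ‖w₁ (ξ - η) * w₂ η‖ = ‖w₁ (ξ - η)‖ * ‖w₂ η‖ := norm_mul _ _
        _ ≤ (C * (1 + ‖ξ - η‖) ^ M) * (c₂ * ((1 + ‖η‖) ^ (p + M + M + (n + 1)))⁻¹) :=
            mul_le_mul (hw₁poly _) h2 (norm_nonneg _) (by positivity)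
        _ ≤ (C * (c₂ + c₁) / δ ^ (p + M)) * ((1 + ‖ξ‖) ^ p)⁻¹ * (((1 + ‖η‖) ^ (n + 1))⁻¹) :=
            keyineq M p (n + 1) hC hc₂pos hc₁pos.le hδpos hA hB hD hP hd
        _ = (C * (c₁ + c₂) / δ ^ (p + M)) * ((1 + ‖ξ‖) ^ p)⁻¹ * (((1 + ‖η‖) ^ (n + 1))⁻¹) := by
            ring_nf
        _ ≤ (C * (c₁ + c₂) / δ ^ (p + M)) * ((1 + ‖ξ‖) ^ p)⁻¹ *
              (((1 + ‖η‖) ^ (n + 1))⁻¹ + ((1 + ‖ξ - η‖) ^ (n + 1))⁻¹) := by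
            have h0 : (0:ℝ) ≤ ((1 + ‖ξ - η‖) ^ (n + 1))⁻¹ := by positivity
            have h1 : (0:ℝ) ≤ (C * (c₁ + c₂) / δ ^ (p + M)) * ((1 + ‖ξ‖) ^ p)⁻¹ := by positivity
            nlinarith
    · -- w₁ decays
      have h1 : ‖w₁ (ξ - η)‖ ≤ c₁ * ((1 + ‖ξ - η‖) ^ (p + M + M + (n + 1)))⁻¹ := by
        have := hc₁ (ξ - η) hη1
        rwa [zpow_neg, zpow_natCast] at this
      have hP : 1 + ‖η‖ ≤ (1 + ‖ξ‖) * (1 + ‖ξ - η‖) := by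
        refine one_add_mul_one_add (norm_nonneg ξ) (norm_nonneg (ξ - η)) ?_
        have : η = ξ - (ξ - η) := by abel
        calc ‖η‖ = ‖ξ - (ξ - η)‖ := by rw [← this]
          _ ≤ ‖ξ‖ + ‖ξ - η‖ := norm_sub_le _ _
      calc ‖w₁ (ξ - η) * w₂ η‖ = ‖w₁ (ξ - η)‖ * ‖w₂ η‖ := norm_mul _ _
        _ ≤ (c₁ * ((1 + ‖ξ - η‖) ^ (p + M + M + (n + 1)))⁻¹) * (C * (1 + ‖η‖) ^ M) :=
            mul_le_mul h1 (hw₂poly _) (norm_nonneg _) (by positivity)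
        _ = (C * (1 + ‖η‖) ^ M) * (c₁ * ((1 + ‖ξ - η‖) ^ (p + M + M + (n + 1)))⁻¹) := by ring
        _ ≤ (C * (c₁ + c₂) / δ ^ (p + M)) * ((1 + ‖ξ‖) ^ p)⁻¹ * (((1 + ‖ξ - η‖) ^ (n + 1))⁻¹) :=
            keyineq M p (n + 1) hC hc₁pos hc₂pos.le hδpos hA hD hB hP hd
        _ ≤ (C * (c₁ + c₂) / δ ^ (p + M)) * ((1 + ‖ξ‖) ^ p)⁻¹ *
              (((1 + ‖η‖) ^ (n + 1))⁻¹ + ((1 + ‖ξ - η‖) ^ (n + 1))⁻¹) := by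
            have h0 : (0:ℝ) ≤ ((1 + ‖η‖) ^ (n + 1))⁻¹ := by positivity
            have h1 : (0:ℝ) ≤ (C * (c₁ + c₂) / δ ^ (p + M)) * ((1 + ‖ξ‖) ^ p)⁻¹ := by positivity
            nlinarith
  -- integrability of dominating functions
  have hbase := base_integrable n
  have hbase' : ∀ ξ : EuclideanSpace ℝ (Fin n),
      Integrable (fun η : EuclideanSpace ℝ (Fin n) => ((1 + ‖ξ - η‖) ^ (n + 1) : ℝ)⁻¹) :=
    fun ξ => hbase.comp_sub_left ξ
  have hmeas : ∀ ξ : EuclideanSpace ℝ (Fin n),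
      AEStronglyMeasurable (fun η => w₁ (ξ - η) * w₂ η) volume := by
    intro ξ
    exact ((hw₁cont.comp (continuous_const.sub continuous_id)).mul hw₂cont).aestronglyMeasurable
  have hint : ∀ ξ ∈ Γ \ {0}, Integrable (fun η => w₁ (ξ - η) * w₂ η) := by
    obtain ⟨K, hKpos, hKb⟩ := master 0
    intro ξ hξ
    refine Integrable.mono'
      (g := fun η => K * ((1 + ‖ξ‖) ^ 0)⁻¹ *
        (((1 + ‖η‖) ^ (n + 1))⁻¹ + ((1 + ‖ξ - η‖) ^ (n + 1))⁻¹))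
      ((hbase.add (hbase' ξ)).const_mul _) (hmeas ξ) ?_
    exact ae_of_all _ (fun η => hKb ξ hξ η)
  refine ⟨hint, ?_⟩
  intro p
  obtain ⟨K, hKpos, hKb⟩ := master p
  set I : ℝ := ∫ η : EuclideanSpace ℝ (Fin n), ((1 + ‖η‖) ^ (n + 1) : ℝ)⁻¹ with hIdef
  have hI0 : 0 ≤ I := integral_nonneg (fun η => by positivity)
  refine ⟨2 * K * I + 1, by positivity, ?_⟩
  intro ξ hξ
  have hgint : Integrable (fun η : EuclideanSpace ℝ (Fin n) =>
      K * ((1 + ‖ξ‖) ^ p)⁻¹ *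
        (((1 + ‖η‖) ^ (n + 1))⁻¹ + ((1 + ‖ξ - η‖) ^ (n + 1))⁻¹)) :=
    (hbase.add (hbase' ξ)).const_mul _
  have h1 : ‖∫ η, w₁ (ξ - η) * w₂ η‖ ≤ ∫ η : EuclideanSpace ℝ (Fin n),
      K * ((1 + ‖ξ‖) ^ p)⁻¹ *
        (((1 + ‖η‖) ^ (n + 1))⁻¹ + ((1 + ‖ξ - η‖) ^ (n + 1))⁻¹) :=
    norm_integral_le_of_norm_le hgint (ae_of_all _ (fun η => hKb ξ hξ η))
  have h2 : (∫ η : EuclideanSpace ℝ (Fin n),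
      K * ((1 + ‖ξ‖) ^ p)⁻¹ *
        (((1 + ‖η‖) ^ (n + 1))⁻¹ + ((1 + ‖ξ - η‖) ^ (n + 1))⁻¹)) =
      K * ((1 + ‖ξ‖) ^ p)⁻¹ * (I + I) := by
    rw [integral_const_mul, integral_add hbase (hbase' ξ)]
    congr 2
    exact integral_sub_left_eq_self (fun η : EuclideanSpace ℝ (Fin n) =>
      ((1 + ‖η‖) ^ (n + 1) : ℝ)⁻¹) volume ξ
  rw [zpow_neg, zpow_natCast]
  have hinv : (0:ℝ) ≤ ((1 + ‖ξ‖) ^ p)⁻¹ := by positivity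
  calc ‖∫ η, w₁ (ξ - η) * w₂ η‖ ≤ K * ((1 + ‖ξ‖) ^ p)⁻¹ * (I + I) := h1.trans_eq h2
    _ = (2 * K * I) * ((1 + ‖ξ‖) ^ p)⁻¹ := by ring
    _ ≤ (2 * K * I + 1) * ((1 + ‖ξ‖) ^ p)⁻¹ := by nlinarith
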